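/- arXiv:1501.02533 — 2 statements merged into one kernel-verified Lean document; each statement's English description precedes it below -/
import Mathlib

section
/- More generally, for any partial order ⪯ on [n], the Lie algebra gl_n^⪯(R) of matrices supported on pairs i ⪯ j is solvable. -/
open LieAlgebra

attribute [local instance 100] LieRing.ofAssociativeRing

namespace Stmt4Aux

variable {R : Type*} [CommRing R] {n : ℕ}

/-- `m` is supported on pairs `i ⪯ j` with height gap at least `g`. -/
def MGap (le : Fin n → Fin n → Prop) (h : Fin n → ℕ) (g : ℕ)
    (m : Matrix (Fin n) (Fin n) R) : Prop :=
  ∀ i j, m i j ≠ 0 → le i j ∧ h i + g ≤ h j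

theorem mgap_mono {le : Fin n → Fin n → Prop} {h : Fin n → ℕ} {g g' : ℕ} (hgg : g' ≤ g)
    {m : Matrix (Fin n) (Fin n) R} (hm : MGap le h g m) : MGap le h g' m := fun i j hne =>
  ⟨(hm i j hne).1, by have := (hm i j hne).2; omega⟩

theorem mgap_lie {le : Fin n → Fin n → Prop} {h : Fin n → ℕ}
    (htrans : ∀ i j k, le i j → le j k → le i k)
    {a b : Matrix (Fin n) (Fin n) R} {ga gb : ℕ}
    (ha : MGap le h ga a) (hb : MGap le h gb b) :
    MGap le h (ga + gb) ⁅a, b⁆ := by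
  intro i j hne
  by_contra hcon
  apply hne
  rw [Ring.lie_def, Matrix.sub_apply, Matrix.mul_apply, Matrix.mul_apply]
  have h1 : ∀ x ∈ Finset.univ, a i x * b x j = 0 := by
    intro x _
    by_contra hx
    obtain ⟨h1, h2⟩ := ha i x (left_ne_zero_of_mul hx)
    obtain ⟨h3, h4⟩ := hb x j (right_ne_zero_of_mul hx)
    exact hcon ⟨htrans _ _ _ h1 h3, by omega⟩
  have h2 : ∀ x ∈ Finset.univ, b i x * a x j = 0 := by
    intro x _
    by_contra hx
    obtain ⟨h1, h2⟩ := hb i x (left_ne_zero_of_mul hx)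
    obtain ⟨h3, h4⟩ := ha x j (right_ne_zero_of_mul hx)
    exact hcon ⟨htrans _ _ _ h1 h3, by omega⟩
  rw [Finset.sum_eq_zero h1, Finset.sum_eq_zero h2, sub_zero]

theorem mgap_lie_base {le : Fin n → Fin n → Prop} {h : Fin n → ℕ}
    (hantisymm : ∀ i j, le i j → le j i → i = j)
    (htrans : ∀ i j k, le i j → le j k → le i k)
    (hlt : ∀ i j, le i j → i ≠ j → h i < h j)
    {a b : Matrix (Fin n) (Fin n) R}
    (ha : MGap le h 0 a) (hb : MGap le h 0 b) : MGap le h 1 ⁅a, b⁆ := by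
  intro i j hne
  obtain ⟨hij, -⟩ := mgap_lie htrans ha hb i j hne
  refine ⟨hij, ?_⟩
  by_cases hij' : i = j
  · exfalso
    apply hne
    subst hij'
    rw [Ring.lie_def, Matrix.sub_apply, Matrix.mul_apply, Matrix.mul_apply, sub_eq_zero]
    refine Finset.sum_congr rfl fun x _ => ?_
    by_cases hx : x = i
    · subst hx; exact mul_comm _ _
    · have e1 : a i x * b x i = 0 := by
        by_contra hxx
        exact hx (hantisymm x i (hb x i (right_ne_zero_of_mul hxx)).1
          (ha i x (left_ne_zero_of_mul hxx)).1)
      have e2 : b i x * a x i = 0 := by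
        by_contra hxx
        exact hx (hantisymm x i (ha x i (right_ne_zero_of_mul hxx)).1
          (hb i x (left_ne_zero_of_mul hxx)).1)
      rw [e1, e2]
  · have := hlt i j hij hij'; omega

/-- The Lie ideal of `S` given by matrices with height gap at least `k + 1`. -/
def Jk (le : Fin n → Fin n → Prop) (h : Fin n → ℕ)
    (htrans : ∀ i j k, le i j → le j k → le i k)
    (S : LieSubalgebra R (Matrix (Fin n) (Fin n) R))
    (hS0 : ∀ y : S, MGap le h 0 (y : Matrix (Fin n) (Fin n) R)) (k : ℕ) : LieIdeal R S where
  carrier := {x : S | MGap le h (k + 1) (x : Matrix (Fin n) (Fin n) R)}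
  add_mem' := by
    intro x y hx hy i j hne
    by_contra hcon
    apply hne
    have hx0 : (x : Matrix (Fin n) (Fin n) R) i j = 0 := by
      by_contra h'; exact hcon (hx i j h')
    have hy0 : (y : Matrix (Fin n) (Fin n) R) i j = 0 := by
      by_contra h'; exact hcon (hy i j h')
    have : ((x + y : S) : Matrix (Fin n) (Fin n) R) i j
        = (x : Matrix (Fin n) (Fin n) R) i j + (y : Matrix (Fin n) (Fin n) R) i j := by
      norm_cast
    rw [this, hx0, hy0, add_zero]
  zero_mem' := by
    intro i j hne
    exfalso
    apply hne
    have : ((0 : S) : Matrix (Fin n) (Fin n) R) = 0 := by norm_cast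
    rw [this]
    rfl
  smul_mem' := by
    intro c x hx i j hne
    apply hx i j
    intro h0
    apply hne
    have : ((c • x : S) : Matrix (Fin n) (Fin n) R) i j
        = c • (x : Matrix (Fin n) (Fin n) R) i j := by
      norm_cast
    rw [this, h0, smul_zero]
  lie_mem := by
    intro y x hx
    have : MGap le h (0 + (k + 1))
        ⁅(y : Matrix (Fin n) (Fin n) R), (x : Matrix (Fin n) (Fin n) R)⁆ :=
      mgap_lie htrans (hS0 y) hx
    rw [zero_add] at this
    intro i j hne
    refine this i j ?_
    rwa [← LieSubalgebra.coe_bracket]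

end Stmt4Aux

open Stmt4Aux in
/-- For any partial order `⪯` on `[n]`, the Lie algebra `gl_n^⪯(R)` of matrices supported on
pairs `i ⪯ j` is solvable. -/
theorem stmt_4 (R : Type*) [CommRing R] (n : ℕ) (le : Fin n → Fin n → Prop)
    (hrefl : ∀ i, le i i) (hantisymm : ∀ i j, le i j → le j i → i = j)
    (htrans : ∀ i j k, le i j → le j k → le i k)
    (S : LieSubalgebra R (Matrix (Fin n) (Fin n) R))
    (hS : (S : Set (Matrix (Fin n) (Fin n) R)) =
      {m : Matrix (Fin n) (Fin n) R | ∀ i j, ¬ le i j → m i j = 0}) :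
    LieAlgebra.IsSolvable S := by
  classical
  set h : Fin n → ℕ := fun i => {k : Fin n | le k i}.ncard with hh
  have hsub : ∀ i j, le i j → {k : Fin n | le k i} ⊆ {k : Fin n | le k j} := by
    intro i j hij k hk
    exact htrans _ _ _ hk hij
  have hle : ∀ i j, le i j → h i ≤ h j := fun i j hij =>
    Set.ncard_le_ncard (hsub i j hij) (Set.toFinite _)
  have hlt : ∀ i j, le i j → i ≠ j → h i < h j := by
    intro i j hij hne
    refine Set.ncard_lt_ncard ⟨hsub i j hij, fun hsub' => ?_⟩ (Set.toFinite _)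
    exact hne (hantisymm i j hij (hsub' (hrefl j)))
  have hbd : ∀ j, h j ≤ n := by
    intro j
    have := Set.ncard_le_ncard (Set.subset_univ {k : Fin n | le k j}) Set.finite_univ
    simpa [Set.ncard_univ] using this
  have hS0 : ∀ y : S, MGap le h 0 (y : Matrix (Fin n) (Fin n) R) := by
    intro y i j hne
    have hy : (y : Matrix (Fin n) (Fin n) R) ∈ (S : Set (Matrix (Fin n) (Fin n) R)) := y.2
    rw [hS] at hy
    have hij : le i j := by
      by_contra hcon
      exact hne (hy i j hcon)
    exact ⟨hij, by simpa using hle i j hij⟩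
  -- the derived series is eventually contained in the gap ideals
  have key : ∀ k : ℕ, LieAlgebra.derivedSeries R S (k + 1) ≤ Jk le h htrans S hS0 k := by
    intro k
    induction k with
    | zero =>
      rw [LieAlgebra.derivedSeries_def, LieAlgebra.derivedSeriesOfIdeal_succ,
        LieAlgebra.derivedSeriesOfIdeal_zero]
      rw [LieSubmodule.lie_le_iff]
      intro x _ y _
      show MGap le h (0 + 1) ((⁅x, y⁆ : S) : Matrix (Fin n) (Fin n) R)
      rw [LieSubalgebra.coe_bracket]
      exact mgap_lie_base hantisymm htrans hlt (hS0 x) (hS0 y)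
    | succ k ih =>
      rw [LieAlgebra.derivedSeries_def, LieAlgebra.derivedSeriesOfIdeal_succ,
        ← LieAlgebra.derivedSeries_def]
      rw [LieSubmodule.lie_le_iff]
      intro x hx y hy
      show MGap le h (k + 1 + 1) ((⁅x, y⁆ : S) : Matrix (Fin n) (Fin n) R)
      rw [LieSubalgebra.coe_bracket]
      have := mgap_lie htrans (ih hx) (ih hy)
      exact mgap_mono (by omega) this
  refine (LieAlgebra.isSolvable_iff (R := R) (L := S)).mpr ⟨n + 1 + 1, ?_⟩
  rw [eq_bot_iff]
  intro x hx
  have hxg : MGap le h (n + 1 + 1) (x : Matrix (Fin n) (Fin n) R) := key (n + 1) hx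
  have hx0 : (x : Matrix (Fin n) (Fin n) R) = 0 := by
    ext i j
    by_contra hne
    have := (hxg i j hne).2
    have := hbd j
    omega
  rw [LieSubmodule.mem_bot]
  exact (LieSubalgebra.coe_zero_iff_zero S x).mp hx0
end

section
/- Let e = ⋀_{a ≤ b} e_{ab} ∈ Λ^N sol_n(R) be the wedge of all N = n(n+1)/2 basis matrix units of sol_n(R) (in a fixed order). Then the Chevalley–Eilenberg boundary satisfies ∂(e) = Σ_{i=1}^n ±(2i − n − 1) · (e with e_{ii} removed); in particular, if n is odd and R has characteristic 2, then ∂(e) = 0. -/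
open ExteriorAlgebra

attribute [local instance 100] LieRing.ofAssociativeRing

/-- The wedge `x₁ ∧ … ∧ xₙ`, as an element of the `n`-th exterior power `⋀[R]^n M`. -/
noncomputable def wedge {R M : Type*} [CommRing R] [AddCommGroup M] [Module R M] (n : ℕ)
    (v : Fin n → M) : ⋀[R]^n M :=
  ⟨ιMulti R n v, ιMulti_range R n (Set.mem_range_self v)⟩

lemma val_succAbove' {m : ℕ} (p : Fin (m+1)) (i : Fin m) :
    ((p.succAbove i : Fin (m+1)) : ℕ) = if (i:ℕ) < (p:ℕ) then (i:ℕ) else (i:ℕ)+1 := by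
  rcases lt_or_ge (i.castSucc) p with h | h
  · rw [Fin.succAbove_of_castSucc_lt _ _ h]
    simp only [Fin.coe_castSucc]
    rw [if_pos]
    exact h
  · rw [Fin.succAbove_of_le_castSucc _ _ h]
    have : (p:ℕ) ≤ i := h
    simp only [Fin.val_succ]
    rw [if_neg (by omega)]

lemma std_eq_iff {R : Type*} [CommRing R] {n : ℕ} (h10 : (1:R) ≠ 0) {a b c d : Fin n}
    (h : Matrix.single a b (1:R) = Matrix.single c d 1) : a = c ∧ b = d := by
  by_cases hcd : c = a ∧ d = b
  · exact ⟨hcd.1.symm, hcd.2.symm⟩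
  · have h1 : (Matrix.single a b (1:R)) a b = (Matrix.single c d (1:R)) a b := by
      rw [h]
    rw [Matrix.single_apply_same, Matrix.single_apply_of_ne c d 1 a b hcd] at h1
    exact absurd h1 h10

section Sign
variable {R M' : Type*} [CommRing R] [AddCommGroup M'] [Module R M']

lemma coreA {m : ℕ} (r s : Fin (m+2)) (h : (r:ℕ) < (s:ℕ)) (j : Fin m) :
    s.succAbove ((⟨(r:ℕ), by have := s.isLt; omega⟩ : Fin (m+1)).succAbove j)
      = r.succAbove ((⟨(s:ℕ)-1, by have := s.isLt; omega⟩ : Fin (m+1)).succAbove j) := by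
  apply Fin.val_injective
  rw [val_succAbove', val_succAbove', val_succAbove', val_succAbove']
  have hs := s.isLt
  have hj := j.isLt
  simp only [Fin.val_mk]
  split_ifs <;> omega

lemma signA {m : ℕ} (g : Fin (m+2) → M') (r s : Fin (m+2)) (h : (r:ℕ) < (s:ℕ)) :
    ιMulti R (m+1) (Fin.cons (g s) (g ∘ fun i : Fin m =>
        s.succAbove ((⟨(r:ℕ), by have := s.isLt; omega⟩ : Fin (m+1)).succAbove i)))
      = ((-1:ℤ)^((s:ℕ)-1)) • ιMulti R (m+1) (g ∘ r.succAbove) := by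
  set u'' : Fin (m+1) := ⟨(s:ℕ)-1, by have := s.isLt; omega⟩ with hu
  set A : Fin (m+1) → Fin (m+2) := Fin.cons s (fun i : Fin m =>
        s.succAbove ((⟨(r:ℕ), by have := s.isLt; omega⟩ : Fin (m+1)).succAbove i)) with hA
  have hcomp : ∀ j, A (u''.cycleRange j) = r.succAbove j := by
    intro j
    rcases eq_or_ne j u'' with rfl | hj
    · rw [Fin.cycleRange_self, hA]
      rw [Fin.cons_zero]
      apply Fin.val_injective
      rw [val_succAbove']
      have hs := s.isLt
      simp only [hu, Fin.val_mk]
      rw [if_neg (by omega)]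
      omega
    · obtain ⟨w, rfl⟩ := Fin.exists_succAbove_eq hj
      rw [Fin.cycleRange_succAbove, hA, Fin.cons_succ]
      exact coreA r s h w
  have hAeq : A = r.succAbove ∘ ⇑(u''.cycleRange)⁻¹ := by
    funext j
    have h2 := hcomp ((u''.cycleRange)⁻¹ j)
    simpa using h2
  have h1 : (Fin.cons (g s) (g ∘ fun i : Fin m =>
        s.succAbove ((⟨(r:ℕ), by have := s.isLt; omega⟩ : Fin (m+1)).succAbove i)) : Fin (m+1) → M')
      = (g ∘ r.succAbove) ∘ ⇑(u''.cycleRange)⁻¹ := by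
    rw [← Fin.comp_cons, ← hA, hAeq]
    rfl
  rw [h1]
  have h2 := AlternatingMap.map_perm (ιMulti R (m+1) (M := M')) (g ∘ r.succAbove) (u''.cycleRange)⁻¹
  rw [h2, Equiv.Perm.sign_inv, Fin.sign_cycleRange, Units.smul_def]
  norm_cast

lemma signB {m : ℕ} (g : Fin (m+2) → M') (r s : Fin (m+2)) (h : (r:ℕ) < (s:ℕ)) :
    ιMulti R (m+1) (Fin.cons (g r) (g ∘ fun i : Fin m =>
        s.succAbove ((⟨(r:ℕ), by have := s.isLt; omega⟩ : Fin (m+1)).succAbove i)))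
      = ((-1:ℤ)^((r:ℕ))) • ιMulti R (m+1) (g ∘ s.succAbove) := by
  set u'' : Fin (m+1) := ⟨(r:ℕ), by have := s.isLt; omega⟩ with hu
  set A : Fin (m+1) → Fin (m+2) := Fin.cons r (fun i : Fin m =>
        s.succAbove ((⟨(r:ℕ), by have := s.isLt; omega⟩ : Fin (m+1)).succAbove i)) with hA
  have hcomp : ∀ j, A (u''.cycleRange j) = s.succAbove j := by
    intro j
    rcases eq_or_ne j u'' with rfl | hj
    · rw [Fin.cycleRange_self, hA]
      rw [Fin.cons_zero]
      apply Fin.val_injective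
      rw [val_succAbove']
      simp only [hu, Fin.val_mk]
      rw [if_pos h]
    · obtain ⟨w, rfl⟩ := Fin.exists_succAbove_eq hj
      rw [Fin.cycleRange_succAbove, hA, Fin.cons_succ]
  have hAeq : A = s.succAbove ∘ ⇑(u''.cycleRange)⁻¹ := by
    funext j
    have h2 := hcomp ((u''.cycleRange)⁻¹ j)
    simpa using h2
  have h1 : (Fin.cons (g r) (g ∘ fun i : Fin m =>
        s.succAbove ((⟨(r:ℕ), by have := s.isLt; omega⟩ : Fin (m+1)).succAbove i)) : Fin (m+1) → M')
      = (g ∘ s.succAbove) ∘ ⇑(u''.cycleRange)⁻¹ := by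
    rw [← Fin.comp_cons, ← hA, hAeq]
    rfl
  rw [h1]
  have h2 := AlternatingMap.map_perm (ιMulti R (m+1) (M := M')) (g ∘ s.succAbove) (u''.cycleRange)⁻¹
  rw [h2, Equiv.Perm.sign_inv, Fin.sign_cycleRange, Units.smul_def]
  norm_cast

lemma dup0 {m : ℕ} (g : Fin (m+2) → M') (r s : Fin (m+2)) (h : (r:ℕ) < (s:ℕ)) (u : Fin (m+2))
    (x : M') (hur : u ≠ r) (hus : u ≠ s) (hx : x = g u) :
    ιMulti R (m+1) (Fin.cons x (g ∘ fun i : Fin m =>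
        s.succAbove ((⟨(r:ℕ), by have := s.isLt; omega⟩ : Fin (m+1)).succAbove i))) = 0 := by
  obtain ⟨w, hw⟩ := Fin.exists_succAbove_eq hus
  have hwr : w ≠ ⟨(r:ℕ), by have := s.isLt; omega⟩ := by
    intro hrfl
    apply hur
    rw [← hw, hrfl]
    apply Fin.val_injective
    rw [val_succAbove']
    simp only [Fin.val_mk]
    rw [if_pos h]
  obtain ⟨j, hj⟩ := Fin.exists_succAbove_eq hwr
  refine AlternatingMap.map_eq_zero_of_eq _ _ (i := (0 : Fin (m+1))) (j := j.succ) ?_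
    (Fin.succ_ne_zero j).symm
  rw [Fin.cons_zero, Fin.cons_succ, hx, Function.comp_apply, hj, hw]


lemma consNeg {R M' : Type*} [CommRing R] [AddCommGroup M'] [Module R M'] {m : ℕ}
    (x : M') (q : Fin m → M') :
    ιMulti R (m+1) (Fin.cons (-x) q) = - ιMulti R (m+1) (Fin.cons x q) := by
  have h1 : (Fin.cons (-x) q : Fin (m+1) → M') = Function.update (Fin.cons x q) 0 (-x) :=
    (Fin.update_cons_zero _ _ _).symm
  rw [h1, AlternatingMap.map_update_neg, Fin.update_cons_zero]

variable {R M : Type*} [CommRing R] [AddCommGroup M] [Module R M] {n : ℕ}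

lemma wedge_eq_zero {v : Fin n → M} (h : ιMulti R n v = 0) : wedge (R := R) n v = 0 :=
  Subtype.ext (by exact h)

lemma wedge_eq_smul {v w : Fin n → M} (z : ℤ) (h : ιMulti R n v = z • ιMulti R n w) :
    wedge (R := R) n v = z • wedge (R := R) n w :=
  Subtype.ext (by simpa [wedge] using h)

end Sign

lemma powS1 (rn sn : ℕ) (h : rn < sn) : (-1:ℤ)^(rn+sn) * (-1)^(sn-1) = -(-1)^rn := by
  have he : rn + sn + (sn - 1) = (rn + 1) + 2*(sn-1) := by omega
  rw [← pow_add, he, pow_add, pow_mul, neg_one_sq, one_pow, mul_one, pow_succ]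
  ring

lemma powS2 (rn sn : ℕ) : (-1:ℤ)^(rn+sn) * (-1)^rn = (-1)^sn := by
  have he : rn + sn + rn = sn + 2*rn := by omega
  rw [← pow_add, he, pow_add, pow_mul, neg_one_sq, one_pow, mul_one]

open Classical in
/-- auxiliary coefficient: the contribution of the basis vector `f u` to the `i`-th term. -/
noncomputable def wc {R : Type*} [CommRing R] {n N : ℕ}
    {S : LieSubalgebra R (Matrix (Fin n) (Fin n) R)}
    (f : Fin N → ↥S) (p : Fin n → Fin N) (i : Fin n) (u : Fin N) : ℤ :=
  if ∃ y : Fin n, (i:ℕ) < (y:ℕ) ∧ (f u : Matrix (Fin n) (Fin n) R) = Matrix.single i y 1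
    then -(-1)^((p i : ℕ))
  else if ∃ x : Fin n, (x:ℕ) < (i:ℕ) ∧ (f u : Matrix (Fin n) (Fin n) R) = Matrix.single x i 1
    then (-1)^((p i : ℕ))
  else 0

open Classical in
/-- auxiliary coefficient for the pair `(r, s)`. -/
noncomputable def cc {R : Type*} [CommRing R] {n N : ℕ}
    {S : LieSubalgebra R (Matrix (Fin n) (Fin n) R)}
    (f : Fin N → ↥S) (p : Fin n → Fin N) (i : Fin n) (r s : Fin N) : ℤ :=
  if r < s then (if r = p i then wc f p i s else if s = p i then wc f p i r else 0) else 0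
set_option maxHeartbeats 2000000 in
set_option synthInstance.maxHeartbeats 400000 in
/-- Let `e` be the wedge of all `N = n(n+1)/2` basis matrix units of `sol_n(R)` (in a fixed
order, given by an enumeration `f`).  Then the Chevalley–Eilenberg boundary satisfies
`∂(e) = Σ_{i=1}^n ±(2i − n − 1) · (e with e_{ii} removed)`; in particular, if `n` is odd and `2 = 0`
in `R`, then `∂(e) = 0`. -/
theorem stmt_13 (R : Type*) [CommRing R] (n M : ℕ) (hM : M + 1 = n * (n + 1) / 2)
    (S : LieSubalgebra R (Matrix (Fin n) (Fin n) R))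
    (hS : (S : Set (Matrix (Fin n) (Fin n) R)) =
      {m : Matrix (Fin n) (Fin n) R | ∀ i j : Fin n, j < i → m i j = 0})
    (d : ∀ k : ℕ, (⋀[R]^(k + 1) ↥S) →ₗ[R] ⋀[R]^k ↥S)
    (hd : ∀ (k : ℕ) (x : Fin (k + 2) → ↥S),
      d (k + 1) (wedge (k + 2) x) =
        ∑ r : Fin (k + 2), ∑ s : Fin (k + 2),
          if h : r < s then
            ((-1 : ℤ) ^ ((r : ℕ) + (s : ℕ))) •
              wedge (k + 1)
                (Fin.cons ⁅x r, x s⁆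
                  (x ∘ fun i : Fin k =>
                    s.succAbove
                      ((⟨(r : ℕ), by
                        have h1 : (r : ℕ) < (s : ℕ) := h
                        have h2 := s.isLt
                        omega⟩ : Fin (k + 1)).succAbove i)))
          else 0)
    (hd0 : ∀ x : Fin 1 → ↥S, d 0 (wedge 1 x) = 0)
    -- `f` enumerates the basis matrix units `{e_{ab} : a ≤ b}` of `sol_n(R)`
    (f : Fin (M + 1) → ↥S) (hf : Function.Injective f)
    (hf1 : ∀ i, ∃ a b : Fin n, a ≤ b ∧
      (f i : Matrix (Fin n) (Fin n) R) = Matrix.single a b 1)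
    (hf2 : ∀ a b : Fin n, a ≤ b →
      ∃ i, (f i : Matrix (Fin n) (Fin n) R) = Matrix.single a b 1)
    -- `p i` is the position of the diagonal unit `e_{ii}` in the enumeration
    (p : Fin n → Fin (M + 1))
    (hp : ∀ i : Fin n, (f (p i) : Matrix (Fin n) (Fin n) R) = Matrix.single i i 1) :
    (∃ ε : Fin n → ℤ, (∀ i, ε i = 1 ∨ ε i = -1) ∧
      d M (wedge (M + 1) f) =
        ∑ i : Fin n,
          ((ε i * (2 * (i : ℕ) + 1 - (n : ℤ))) • wedge M (f ∘ (p i).succAbove))) ∧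
    (Odd n → (2 : R) = 0 → d M (wedge (M + 1) f) = 0) := by
  classical
  have key : d M (wedge (M + 1) f) =
      ∑ i : Fin n,
        ((((-1:ℤ)^((p i : ℕ))) * (2 * (i : ℕ) + 1 - (n : ℤ))) • wedge M (f ∘ (p i).succAbove)) := by
    cases M with
    | zero =>
      have hn1 : n = 1 := by
        rcases n with _ | _ | m
        · simp at hM
        · rfl
        · exfalso
          have h6 : 6 ≤ (m+2)*(m+2+1) := by nlinarith
          set q := (m+2)*(m+2+1) with hq
          omega
      subst hn1
      rw [hd0 f]
      symm
      apply Finset.sum_eq_zero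
      intro i _
      have hi0 : ((i:ℕ):ℤ) = 0 := by
        have := i.isLt
        omega
      have hc : ((-1:ℤ)^((p i : ℕ)) * (2 * ((i:ℕ):ℤ) + 1 - ((1:ℕ):ℤ))) = 0 := by
        rw [hi0]
        norm_num
      rw [hc, zero_smul]
    | succ k =>
      have hn2 : 2 ≤ n := by
        by_contra hn
        push_neg at hn
        interval_cases n <;> omega
      have h10 : (1:R) ≠ 0 := by
        intro h1
        have hall : ∀ x : Matrix (Fin n) (Fin n) R, x = 0 := by
          intro x
          ext i j
          calc x i j = x i j * 1 := (mul_one _).symm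
          _ = 0 := by rw [h1, mul_zero]
          _ = (0 : Matrix (Fin n) (Fin n) R) i j := by simp
        have hf01 : f 0 = f 1 :=
          Subtype.ext ((hall (f 0 : Matrix (Fin n) (Fin n) R)).trans (hall _).symm)
        have h01 := congrArg Fin.val (hf hf01)
        simp [Fin.val_zero, Fin.val_one] at h01
      have hfeq : ∀ u v : Fin (k+2),
          (f u : Matrix (Fin n) (Fin n) R) = (f v : Matrix (Fin n) (Fin n) R) → u = v :=
        fun u v h => hf (Subtype.ext h)
      have hEq : ∀ {a b c d : Fin n},
          Matrix.single a b (1:R) = Matrix.single c d 1 → a = c ∧ b = d :=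
        fun h => std_eq_iff h10 h
      have hdiag : ∀ (u : Fin (k+2)) (i : Fin n),
          (f u : Matrix (Fin n) (Fin n) R) = Matrix.single i i 1 → u = p i :=
        fun u i h => hfeq u (p i) (by rw [h, hp])
      have hwc_row : ∀ (i y : Fin n) (u : Fin (k+2)), (i:ℕ) < (y:ℕ) →
          (f u : Matrix (Fin n) (Fin n) R) = Matrix.single i y 1 →
          wc f p i u = -(-1:ℤ)^((p i : ℕ)) := by
        intro i y u hy h
        simp only [wc]
        rw [if_pos ⟨y, hy, h⟩]
      have hwc_col : ∀ (i x : Fin n) (u : Fin (k+2)), (x:ℕ) < (i:ℕ) →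
          (f u : Matrix (Fin n) (Fin n) R) = Matrix.single x i 1 →
          wc f p i u = (-1:ℤ)^((p i : ℕ)) := by
        intro i x u hx h
        have hP1 : ¬ ∃ y : Fin n, (i:ℕ) < (y:ℕ) ∧
            (f u : Matrix (Fin n) (Fin n) R) = Matrix.single i y 1 := by
          rintro ⟨y, hy, h'⟩
          obtain ⟨e1, e2⟩ := hEq (h'.symm.trans h)
          have : (i:ℕ) = (x:ℕ) := by rw [e1]
          omega
        simp only [wc]
        rw [if_neg hP1, if_pos ⟨x, hx, h⟩]
      have hwc_zero : ∀ (i a b : Fin n) (u : Fin (k+2)),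
          (f u : Matrix (Fin n) (Fin n) R) = Matrix.single a b 1 →
          ¬(a = i ∧ (i:ℕ) < (b:ℕ)) → ¬(b = i ∧ (a:ℕ) < (i:ℕ)) →
          wc f p i u = 0 := by
        intro i a b u h hn1 hn2'
        have hP1 : ¬ ∃ y : Fin n, (i:ℕ) < (y:ℕ) ∧
            (f u : Matrix (Fin n) (Fin n) R) = Matrix.single i y 1 := by
          rintro ⟨y, hy, h'⟩
          obtain ⟨e1, e2⟩ := hEq (h.symm.trans h')
          refine hn1 ⟨e1, ?_⟩
          rw [e2]; exact hy
        have hP2 : ¬ ∃ x : Fin n, (x:ℕ) < (i:ℕ) ∧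
            (f u : Matrix (Fin n) (Fin n) R) = Matrix.single x i 1 := by
          rintro ⟨x, hx, h'⟩
          obtain ⟨e1, e2⟩ := hEq (h.symm.trans h')
          refine hn2' ⟨e2, ?_⟩
          rw [e1]; exact hx
        simp only [wc]
        rw [if_neg hP1, if_neg hP2]
      have hwc_pi : ∀ i : Fin n, wc f p i (p i) = 0 := by
        intro i
        refine hwc_zero i i i (p i) (hp i) ?_ ?_
        · rintro ⟨-, h⟩; omega
        · rintro ⟨-, h⟩; omega
      have term_eq : ∀ r s : Fin (k + 2),
          (if h : r < s then
            ((-1 : ℤ) ^ ((r : ℕ) + (s : ℕ))) •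
              wedge (k + 1)
                (Fin.cons ⁅f r, f s⁆
                  (f ∘ fun i : Fin k =>
                    s.succAbove
                      ((⟨(r : ℕ), by
                        have h1 : (r : ℕ) < (s : ℕ) := h
                        have h2 := s.isLt
                        omega⟩ : Fin (k + 1)).succAbove i)))
          else (0 : ⋀[R]^(k+1) ↥S))
          = ∑ i : Fin n, cc f p i r s • wedge (k+1) (f ∘ (p i).succAbove) := by
        intro r s
        by_cases hrs : r < s
        case neg =>
          rw [dif_neg hrs]
          symm
          apply Finset.sum_eq_zero
          intro i _
          simp only [cc]
          rw [if_neg hrs, zero_smul]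
        rw [dif_pos hrs]
        have hrsN : (r:ℕ) < (s:ℕ) := hrs
        obtain ⟨a, b, hab, hfr⟩ := hf1 r
        obtain ⟨c, d, hcd, hfs⟩ := hf1 s
        have hrne : r ≠ s := ne_of_lt hrs
        have habcd : ¬(a = c ∧ b = d) := by
          rintro ⟨rfl, rfl⟩
          exact hrne (hfeq r s (hfr.trans hfs.symm))
        by_cases hbc : b = c
        · subst hbc
          by_cases hda : d = a
          · -- C1 : impossible
            exfalso
            apply habcd
            have h1 : (a:ℕ) ≤ b := hab
            have h2 : (b:ℕ) ≤ d := hcd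
            have h3 : (d:ℕ) = (a:ℕ) := by rw [hda]
            constructor
            · exact Fin.val_injective (by omega)
            · exact Fin.val_injective (by omega)
          · by_cases hab' : a = b
            · -- C2 : r diagonal, bracket = f s
              subst hab'
              have hrp : r = p a := hdiag r a hfr
              subst hrp
              have had : (a:ℕ) < (d:ℕ) := by
                have h1 : (a:ℕ) ≤ d := hcd
                have h2 : (d:ℕ) ≠ (a:ℕ) := fun hh => hda (Fin.val_injective hh)
                omega
              have hBel : ⁅f (p a), f s⁆ = f s := by
                refine Subtype.ext ?_
                rw [LieSubalgebra.coe_bracket, Ring.lie_def, hfr, hfs,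
                  Matrix.single_mul_single_same, one_mul,
                  Matrix.single_mul_single_of_ne _ _ _ _ hda _, sub_zero]
              rw [hBel,
                wedge_eq_smul ((-1:ℤ)^((s:ℕ)-1)) (signA f (p a) s hrsN), smul_smul]
              symm
              have hz : ∀ i ∈ Finset.univ, i ≠ a →
                  cc f p i (p a) s • wedge (k+1) (f ∘ (p i).succAbove) = (0 : ⋀[R]^(k+1) ↥S) := by
                intro i _ hia
                have h1 : ¬ (p a = p i) := by
                  intro h
                  have he : Matrix.single a a (1:R) = Matrix.single i i 1 := by
                    rw [← hp a, h, hp i]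
                  exact hia ((hEq he).1.symm)
                have h2 : ¬ (s = p i) := by
                  intro h
                  have he : Matrix.single a d (1:R) = Matrix.single i i 1 := by
                    rw [← hfs, h, hp i]
                  obtain ⟨e1, e2⟩ := hEq he
                  rw [e1, e2] at had
                  exact lt_irrefl _ had
                simp only [cc]
                rw [if_pos hrs, if_neg h1, if_neg h2, zero_smul]
              rw [Finset.sum_eq_single a hz (fun h => absurd (Finset.mem_univ a) h)]
              have hval : cc f p a (p a) s = -(-1:ℤ)^((p a : ℕ)) := by
                simp only [cc]
                rw [if_pos hrs, if_pos trivial, hwc_row a d s had hfs]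
              rw [hval]
              congr 1
              rw [powS1 _ _ hrsN]
            · by_cases hdb : d = b
              · -- C3 : s diagonal, bracket = f r
                subst hdb
                have hsp : s = p d := hdiag s d hfs
                subst hsp
                have hab2 : (a:ℕ) < (d:ℕ) := by
                  have h1 : (a:ℕ) ≤ d := hab
                  have h2 : (a:ℕ) ≠ (d:ℕ) := fun hh => hab' (Fin.val_injective hh)
                  omega
                have hBel : ⁅f r, f (p d)⁆ = f r := by
                  refine Subtype.ext ?_
                  rw [LieSubalgebra.coe_bracket, Ring.lie_def, hfr, hfs,
                    Matrix.single_mul_single_same, one_mul,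
                    Matrix.single_mul_single_of_ne _ _ _ _ hda _, sub_zero]
                rw [hBel,
                  wedge_eq_smul ((-1:ℤ)^((r:ℕ))) (signB f r (p d) hrsN), smul_smul]
                symm
                have hz : ∀ i ∈ Finset.univ, i ≠ d →
                    cc f p i r (p d) • wedge (k+1) (f ∘ (p i).succAbove) = (0 : ⋀[R]^(k+1) ↥S) := by
                  intro i _ hid
                  have h1 : ¬ (r = p i) := by
                    intro h
                    have he : Matrix.single a d (1:R) = Matrix.single i i 1 := by
                      rw [← hfr, h, hp i]
                    obtain ⟨e1, e2⟩ := hEq he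
                    exact hab' (e1.trans e2.symm)
                  have h2 : ¬ (p d = p i) := by
                    intro h
                    have he : Matrix.single d d (1:R) = Matrix.single i i 1 := by
                      rw [← hp d, h, hp i]
                    exact hid ((hEq he).1.symm)
                  simp only [cc]
                  rw [if_pos hrs, if_neg h1, if_neg h2, zero_smul]
                rw [Finset.sum_eq_single d hz (fun h => absurd (Finset.mem_univ d) h)]
                have h1b : ¬ (r = p d) := by
                  intro h
                  have he : Matrix.single a d (1:R) = Matrix.single d d 1 := by
                    rw [← hfr, h, hp d]
                  exact hab' (hEq he).1
                have hval : cc f p d r (p d) = (-1:ℤ)^((p d : ℕ)) := by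
                  simp only [cc]
                  rw [if_pos hrs, if_neg h1b, if_pos trivial, hwc_col d a r hab2 hfr]
                rw [hval]
                congr 1
                rw [powS2]
              · -- C4 : duplicate, term is zero
                obtain ⟨u₀, hu0⟩ := hf2 a d (le_trans hab hcd)
                have hur : u₀ ≠ r := by
                  intro h
                  apply hdb
                  have h3 : (f r : Matrix (Fin n) (Fin n) R) = Matrix.single a d 1 := by
                    rw [← h, hu0]
                  exact ((hEq (hfr.symm.trans h3)).2).symm
                have hus : u₀ ≠ s := by
                  intro h
                  apply hab'
                  have h3 : (f s : Matrix (Fin n) (Fin n) R) = Matrix.single a d 1 := by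
                    rw [← h, hu0]
                  exact ((hEq (hfs.symm.trans h3)).1).symm
                have hBel : ⁅f r, f s⁆ = f u₀ := by
                  refine Subtype.ext ?_
                  rw [LieSubalgebra.coe_bracket, Ring.lie_def, hfr, hfs,
                    Matrix.single_mul_single_same, one_mul,
                    Matrix.single_mul_single_of_ne _ _ _ _ hda _, sub_zero, hu0]
                rw [hBel, wedge_eq_zero (dup0 f r s hrsN u₀ (f u₀) hur hus rfl), smul_zero]
                symm
                apply Finset.sum_eq_zero
                intro i _
                have h1 : ¬ (r = p i) := by
                  intro h
                  have he : Matrix.single a b (1:R) = Matrix.single i i 1 := by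
                    rw [← hfr, h, hp i]
                  obtain ⟨e1, e2⟩ := hEq he
                  exact hab' (e1.trans e2.symm)
                have h2 : ¬ (s = p i) := by
                  intro h
                  have he : Matrix.single b d (1:R) = Matrix.single i i 1 := by
                    rw [← hfs, h, hp i]
                  obtain ⟨e1, e2⟩ := hEq he
                  exact hdb (e2.trans e1.symm)
                simp only [cc]
                rw [if_pos hrs, if_neg h1, if_neg h2, zero_smul]
        · by_cases hda : d = a
          · subst hda
            by_cases hcd' : c = d
            · -- C5 : s diagonal, bracket = -(f r)
              subst hcd'
              have hsp : s = p c := hdiag s c hfs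
              subst hsp
              have hcb2 : (c:ℕ) < (b:ℕ) := by
                have h1 : (c:ℕ) ≤ b := hab
                have h2 : (b:ℕ) ≠ (c:ℕ) := fun hh => hbc (Fin.val_injective hh)
                omega
              have hBel : ⁅f r, f (p c)⁆ = -(f r) := by
                refine Subtype.ext ?_
                have hcoe : ((-(f r) : ↥S) : Matrix (Fin n) (Fin n) R)
                    = -((f r : Matrix (Fin n) (Fin n) R)) := rfl
                rw [LieSubalgebra.coe_bracket, Ring.lie_def, hfr, hfs,
                  Matrix.single_mul_single_of_ne _ _ _ _ hbc _,
                  Matrix.single_mul_single_same, one_mul, zero_sub, hcoe, hfr]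
              have hne : ιMulti R (k+1) (Fin.cons (-(f r)) (f ∘ fun i : Fin k =>
                  (p c).succAbove ((⟨(r:ℕ), by have := (p c).isLt; omega⟩ : Fin (k+1)).succAbove i)))
                  = (-(-1:ℤ)^((r:ℕ))) • ιMulti R (k+1) (f ∘ (p c).succAbove) := by
                rw [consNeg, signB f r (p c) hrsN, neg_smul]
              rw [hBel, wedge_eq_smul (-(-1:ℤ)^((r:ℕ))) hne, smul_smul]
              symm
              have hz : ∀ i ∈ Finset.univ, i ≠ c →
                  cc f p i r (p c) • wedge (k+1) (f ∘ (p i).succAbove) = (0 : ⋀[R]^(k+1) ↥S) := by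
                intro i _ hic
                have h1 : ¬ (r = p i) := by
                  intro h
                  have he : Matrix.single c b (1:R) = Matrix.single i i 1 := by
                    rw [← hfr, h, hp i]
                  obtain ⟨e1, e2⟩ := hEq he
                  exact hbc (e2.trans e1.symm)
                have h2 : ¬ (p c = p i) := by
                  intro h
                  have he : Matrix.single c c (1:R) = Matrix.single i i 1 := by
                    rw [← hp c, h, hp i]
                  exact hic ((hEq he).1.symm)
                simp only [cc]
                rw [if_pos hrs, if_neg h1, if_neg h2, zero_smul]
              rw [Finset.sum_eq_single c hz (fun h => absurd (Finset.mem_univ c) h)]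
              have h1c : ¬ (r = p c) := by
                intro h
                have he : Matrix.single c b (1:R) = Matrix.single c c 1 := by
                  rw [← hfr, h, hp c]
                exact hbc (hEq he).2
              have hval : cc f p c r (p c) = -(-1:ℤ)^((p c : ℕ)) := by
                simp only [cc]
                rw [if_pos hrs, if_neg h1c, if_pos trivial, hwc_row c b r hcb2 hfr]
              rw [hval]
              congr 1
              rw [mul_neg, powS2]
            · by_cases hab'' : d = b
              · -- C6 : r diagonal, bracket = -(f s)
                subst hab''
                have hrp : r = p d := hdiag r d hfr
                subst hrp
                have hca2 : (c:ℕ) < (d:ℕ) := by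
                  have h1 : (c:ℕ) ≤ d := hcd
                  have h2 : (c:ℕ) ≠ (d:ℕ) := fun hh => hcd' (Fin.val_injective hh)
                  omega
                have hdc : d ≠ c := fun hh => hcd' hh.symm
                have hBel : ⁅f (p d), f s⁆ = -(f s) := by
                  refine Subtype.ext ?_
                  have hcoe : ((-(f s) : ↥S) : Matrix (Fin n) (Fin n) R)
                      = -((f s : Matrix (Fin n) (Fin n) R)) := rfl
                  rw [LieSubalgebra.coe_bracket, Ring.lie_def, hfr, hfs,
                    Matrix.single_mul_single_of_ne _ _ _ _ hdc _,
                    Matrix.single_mul_single_same, one_mul, zero_sub, hcoe, hfs]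
                have hne : ιMulti R (k+1) (Fin.cons (-(f s)) (f ∘ fun i : Fin k =>
                    s.succAbove ((⟨((p d : Fin (k+2)):ℕ), by have := s.isLt; omega⟩ : Fin (k+1)).succAbove i)))
                    = (-(-1:ℤ)^((s:ℕ)-1)) • ιMulti R (k+1) (f ∘ (p d).succAbove) := by
                  rw [consNeg, signA f (p d) s hrsN, neg_smul]
                rw [hBel, wedge_eq_smul (-(-1:ℤ)^((s:ℕ)-1)) hne, smul_smul]
                symm
                have hz : ∀ i ∈ Finset.univ, i ≠ d →
                    cc f p i (p d) s • wedge (k+1) (f ∘ (p i).succAbove) = (0 : ⋀[R]^(k+1) ↥S) := by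
                  intro i _ hid
                  have h1 : ¬ (p d = p i) := by
                    intro h
                    have he : Matrix.single d d (1:R) = Matrix.single i i 1 := by
                      rw [← hp d, h, hp i]
                    exact hid ((hEq he).1.symm)
                  have h2 : ¬ (s = p i) := by
                    intro h
                    have he : Matrix.single c d (1:R) = Matrix.single i i 1 := by
                      rw [← hfs, h, hp i]
                    obtain ⟨e1, e2⟩ := hEq he
                    exact hcd' (e1.trans e2.symm)
                  simp only [cc]
                  rw [if_pos hrs, if_neg h1, if_neg h2, zero_smul]
                rw [Finset.sum_eq_single d hz (fun h => absurd (Finset.mem_univ d) h)]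
                have hval : cc f p d (p d) s = (-1:ℤ)^((p d : ℕ)) := by
                  simp only [cc]
                  rw [if_pos hrs, if_pos trivial, hwc_col d c s hca2 hfs]
                rw [hval]
                congr 1
                rw [mul_neg, powS1 _ _ hrsN, neg_neg]
              · -- C7 : duplicate with minus sign
                obtain ⟨u₀, hu0⟩ := hf2 c b (le_trans hcd hab)
                have hur : u₀ ≠ r := by
                  intro h
                  apply hcd'
                  have h3 : (f r : Matrix (Fin n) (Fin n) R) = Matrix.single c b 1 := by
                    rw [← h, hu0]
                  exact ((hEq (hfr.symm.trans h3)).1).symm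
                have hus : u₀ ≠ s := by
                  intro h
                  apply hab''
                  have h3 : (f s : Matrix (Fin n) (Fin n) R) = Matrix.single c b 1 := by
                    rw [← h, hu0]
                  exact (hEq (hfs.symm.trans h3)).2
                have hBel : ⁅f r, f s⁆ = -(f u₀) := by
                  refine Subtype.ext ?_
                  have hcoe : ((-(f u₀) : ↥S) : Matrix (Fin n) (Fin n) R)
                      = -((f u₀ : Matrix (Fin n) (Fin n) R)) := rfl
                  rw [LieSubalgebra.coe_bracket, Ring.lie_def, hfr, hfs,
                    Matrix.single_mul_single_of_ne _ _ _ _ hbc _,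
                    Matrix.single_mul_single_same, one_mul, zero_sub, hcoe, hu0]
                have hne : ιMulti R (k+1) (Fin.cons (-(f u₀)) (f ∘ fun i : Fin k =>
                    s.succAbove ((⟨(r:ℕ), by have := s.isLt; omega⟩ : Fin (k+1)).succAbove i))) = 0 := by
                  rw [consNeg, dup0 f r s hrsN u₀ (f u₀) hur hus rfl, neg_zero]
                rw [hBel, wedge_eq_zero hne, smul_zero]
                symm
                apply Finset.sum_eq_zero
                intro i _
                have h1 : ¬ (r = p i) := by
                  intro h
                  have he : Matrix.single d b (1:R) = Matrix.single i i 1 := by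
                    rw [← hfr, h, hp i]
                  obtain ⟨e1, e2⟩ := hEq he
                  exact hab'' (e1.trans e2.symm)
                have h2 : ¬ (s = p i) := by
                  intro h
                  have he : Matrix.single c d (1:R) = Matrix.single i i 1 := by
                    rw [← hfs, h, hp i]
                  obtain ⟨e1, e2⟩ := hEq he
                  exact hcd' (e1.trans e2.symm)
                simp only [cc]
                rw [if_pos hrs, if_neg h1, if_neg h2, zero_smul]
          · -- C8 : bracket = 0
            have hBel : ⁅f r, f s⁆ = 0 := by
              refine Subtype.ext ?_
              rw [LieSubalgebra.coe_bracket, Ring.lie_def, hfr, hfs,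
                Matrix.single_mul_single_of_ne _ _ _ _ hbc _,
                Matrix.single_mul_single_of_ne _ _ _ _ hda _, sub_zero]
              simp
            rw [hBel, wedge_eq_zero ((ιMulti R (k+1)).map_coord_zero (0 : Fin (k+1))
              (by rw [Fin.cons_zero])), smul_zero]
            symm
            apply Finset.sum_eq_zero
            intro i _
            simp only [cc]
            rw [if_pos hrs]
            by_cases h1 : r = p i
            · rw [if_pos h1]
              obtain ⟨e1, e2⟩ := hEq (show Matrix.single a b (1:R)
                  = Matrix.single i i 1 by rw [← hfr, h1, hp])
              rw [hwc_zero i c d s hfs ?_ ?_, zero_smul]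
              · rintro ⟨hc1, -⟩
                exact hbc (e2.trans hc1.symm)
              · rintro ⟨hd1, -⟩
                exact hda (hd1.trans e1.symm)
            · rw [if_neg h1]
              by_cases h2 : s = p i
              · rw [if_pos h2]
                obtain ⟨e1, e2⟩ := hEq (show Matrix.single c d (1:R)
                    = Matrix.single i i 1 by rw [← hfs, h2, hp])
                rw [hwc_zero i a b r hfr ?_ ?_, zero_smul]
                · rintro ⟨ha1, -⟩
                  exact hda (e2.trans ha1.symm)
                · rintro ⟨hb1, -⟩
                  exact hbc (hb1.trans e1.symm)
              · rw [if_neg h2, zero_smul]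
      -- counting
      have card1 : ∀ i : Fin n,
          (Finset.univ.filter (fun u : Fin (k+2) => ∃ y : Fin n, (i:ℕ) < (y:ℕ) ∧
            (f u : Matrix (Fin n) (Fin n) R) = Matrix.single i y 1)).card
          = n - 1 - (i:ℕ) := by
        intro i
        have hbij : (Finset.Ioi i).card
            = (Finset.univ.filter (fun u : Fin (k+2) => ∃ y : Fin n, (i:ℕ) < (y:ℕ) ∧
              (f u : Matrix (Fin n) (Fin n) R) = Matrix.single i y 1)).card := by
          refine Finset.card_bij
            (fun (y : Fin n) (hy : y ∈ Finset.Ioi i) => Classical.choose (hf2 i y (by exact le_of_lt (Finset.mem_Ioi.mp hy)))) ?_ ?_ ?_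
          · intro y hy
            have hspec := Classical.choose_spec (hf2 i y (by exact le_of_lt (Finset.mem_Ioi.mp hy)))
            refine Finset.mem_filter.mpr ⟨Finset.mem_univ _, ⟨y, by exact (show i < y from Finset.mem_Ioi.mp hy), hspec⟩⟩
          · intro y1 h1 y2 h2 heq
            have hs1 := Classical.choose_spec (hf2 i y1 (by exact le_of_lt (Finset.mem_Ioi.mp h1)))
            have hs2 := Classical.choose_spec (hf2 i y2 (by exact le_of_lt (Finset.mem_Ioi.mp h2)))
            have heq2 : Classical.choose (hf2 i y1 (by exact le_of_lt (Finset.mem_Ioi.mp h1)))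
                = Classical.choose (hf2 i y2 (by exact le_of_lt (Finset.mem_Ioi.mp h2))) := heq
            rw [heq2] at hs1
            exact (hEq (hs1.symm.trans hs2)).2
          · intro u hu
            obtain ⟨y, hy, hfu⟩ := (Finset.mem_filter.mp hu).2
            refine ⟨y, Finset.mem_Ioi.mpr (by exact hy), ?_⟩
            have hspec := Classical.choose_spec (hf2 i y (by exact le_of_lt hy))
            exact hfeq _ u (hspec.trans hfu.symm)
        rw [← hbij, Fin.card_Ioi]
      have card2 : ∀ i : Fin n,
          (Finset.univ.filter (fun u : Fin (k+2) => ∃ x : Fin n, (x:ℕ) < (i:ℕ) ∧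
            (f u : Matrix (Fin n) (Fin n) R) = Matrix.single x i 1)).card
          = (i:ℕ) := by
        intro i
        have hbij : (Finset.Iio i).card
            = (Finset.univ.filter (fun u : Fin (k+2) => ∃ x : Fin n, (x:ℕ) < (i:ℕ) ∧
              (f u : Matrix (Fin n) (Fin n) R) = Matrix.single x i 1)).card := by
          refine Finset.card_bij
            (fun (x : Fin n) (hx : x ∈ Finset.Iio i) => Classical.choose (hf2 x i (by exact le_of_lt (Finset.mem_Iio.mp hx)))) ?_ ?_ ?_
          · intro x hx
            have hspec := Classical.choose_spec (hf2 x i (by exact le_of_lt (Finset.mem_Iio.mp hx)))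
            refine Finset.mem_filter.mpr ⟨Finset.mem_univ _, ⟨x, by exact (show x < i from Finset.mem_Iio.mp hx), hspec⟩⟩
          · intro x1 h1 x2 h2 heq
            have hs1 := Classical.choose_spec (hf2 x1 i (by exact le_of_lt (Finset.mem_Iio.mp h1)))
            have hs2 := Classical.choose_spec (hf2 x2 i (by exact le_of_lt (Finset.mem_Iio.mp h2)))
            have heq2 : Classical.choose (hf2 x1 i (by exact le_of_lt (Finset.mem_Iio.mp h1)))
                = Classical.choose (hf2 x2 i (by exact le_of_lt (Finset.mem_Iio.mp h2))) := heq
            rw [heq2] at hs1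
            exact (hEq (hs1.symm.trans hs2)).1
          · intro u hu
            obtain ⟨x, hx, hfu⟩ := (Finset.mem_filter.mp hu).2
            refine ⟨x, Finset.mem_Iio.mpr (by exact hx), ?_⟩
            have hspec := Classical.choose_spec (hf2 x i (by exact le_of_lt hx))
            exact hfeq _ u (hspec.trans hfu.symm)
        rw [← hbij, Fin.card_Iio]
      have ccsum : ∀ i : Fin n, (∑ r : Fin (k+2), ∑ s : Fin (k+2), cc f p i r s)
          = (-1:ℤ)^((p i : ℕ)) * (2 * ((i:ℕ):ℤ) + 1 - (n:ℤ)) := by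
        intro i
        have hsplit : ∀ r s : Fin (k+2), cc f p i r s =
            (if r = p i ∧ p i < s then wc f p i s else 0)
              + (if s = p i ∧ r < p i then wc f p i r else 0) := by
          intro r s
          simp only [cc]
          by_cases h0 : r < s
          · rw [if_pos h0]
            by_cases h1 : r = p i
            · rw [if_pos h1,
                if_pos (show r = p i ∧ p i < s from ⟨h1, by rw [← h1]; exact h0⟩),
                if_neg (show ¬(s = p i ∧ r < p i) from fun hh => by
                  have h3 := hh.2
                  rw [← h1] at h3
                  exact lt_irrefl _ h3),
                add_zero]
            · rw [if_neg h1,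
                if_neg (show ¬(r = p i ∧ p i < s) from fun hh => h1 hh.1)]
              by_cases h2 : s = p i
              · rw [if_pos h2,
                  if_pos (show s = p i ∧ r < p i from ⟨h2, by rw [← h2]; exact h0⟩), zero_add]
              · rw [if_neg h2,
                  if_neg (show ¬(s = p i ∧ r < p i) from fun hh => h2 hh.1), add_zero]
          · rw [if_neg h0,
              if_neg (show ¬(r = p i ∧ p i < s) from fun hh => h0 (by rw [hh.1]; exact hh.2)),
              if_neg (show ¬(s = p i ∧ r < p i) from fun hh => h0 (by rw [hh.1]; exact hh.2)),
              add_zero]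
        calc (∑ r : Fin (k+2), ∑ s : Fin (k+2), cc f p i r s)
            = ∑ r : Fin (k+2), ∑ s : Fin (k+2),
                ((if r = p i ∧ p i < s then wc f p i s else 0)
                  + (if s = p i ∧ r < p i then wc f p i r else 0)) :=
              Finset.sum_congr rfl fun r _ => Finset.sum_congr rfl fun s _ => hsplit r s
          _ = (∑ r : Fin (k+2), ∑ s : Fin (k+2), if r = p i ∧ p i < s then wc f p i s else 0)
              + (∑ r : Fin (k+2), ∑ s : Fin (k+2), if s = p i ∧ r < p i then wc f p i r else 0) := by
              simp only [Finset.sum_add_distrib]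
          _ = (∑ s : Fin (k+2), if p i < s then wc f p i s else 0)
              + (∑ r : Fin (k+2), if r < p i then wc f p i r else 0) := by
              congr 1
              · rw [Finset.sum_comm]
                refine Finset.sum_congr rfl fun s _ => ?_
                rw [Finset.sum_eq_single (p i)]
                · simp
                · intro r _ hr
                  rw [if_neg (fun h => hr h.1)]
                · intro h
                  exact absurd (Finset.mem_univ _) h
              · refine Finset.sum_congr rfl fun r _ => ?_
                rw [Finset.sum_eq_single (p i)]
                · simp
                · intro s _ hs
                  rw [if_neg (fun h => hs h.1)]
                · intro h
                  exact absurd (Finset.mem_univ _) h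
          _ = ∑ u : Fin (k+2), wc f p i u := by
              rw [← Finset.sum_add_distrib]
              refine Finset.sum_congr rfl fun u _ => ?_
              rcases lt_trichotomy u (p i) with h | h | h
              · rw [if_neg (asymm h), if_pos h, zero_add]
              · rw [h]
                simp [hwc_pi i, lt_irrefl]
              · rw [if_pos h, if_neg (asymm h), add_zero]
          _ = (∑ u : Fin (k+2), if ∃ y : Fin n, (i:ℕ) < (y:ℕ) ∧
                  (f u : Matrix (Fin n) (Fin n) R) = Matrix.single i y 1
                then -(-1:ℤ)^((p i : ℕ)) else 0)
              + (∑ u : Fin (k+2), if ∃ x : Fin n, (x:ℕ) < (i:ℕ) ∧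
                  (f u : Matrix (Fin n) (Fin n) R) = Matrix.single x i 1
                then (-1:ℤ)^((p i : ℕ)) else 0) := by
              rw [← Finset.sum_add_distrib]
              refine Finset.sum_congr rfl fun u _ => ?_
              simp only [wc]
              by_cases h1 : ∃ y : Fin n, (i:ℕ) < (y:ℕ) ∧
                  (f u : Matrix (Fin n) (Fin n) R) = Matrix.single i y 1
              · have h2 : ¬ ∃ x : Fin n, (x:ℕ) < (i:ℕ) ∧
                    (f u : Matrix (Fin n) (Fin n) R) = Matrix.single x i 1 := by
                  obtain ⟨y, hy, hEqy⟩ := h1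
                  rintro ⟨x, hx, hEqx⟩
                  obtain ⟨e1, e2⟩ := hEq (hEqy.symm.trans hEqx)
                  have he1 : (i:ℕ) = (x:ℕ) := by rw [e1]
                  omega
                rw [if_pos h1, if_pos h1, if_neg h2, add_zero]
              · rw [if_neg h1, if_neg h1, zero_add]
          _ = ((n - 1 - (i:ℕ) : ℕ) : ℤ) * (-(-1:ℤ)^((p i : ℕ)))
              + (((i:ℕ) : ℕ) : ℤ) * ((-1:ℤ)^((p i : ℕ))) := by
              congr 1
              · rw [← Finset.sum_filter, Finset.sum_const, card1 i, nsmul_eq_mul]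
              · rw [← Finset.sum_filter, Finset.sum_const, card2 i, nsmul_eq_mul]
          _ = (-1:ℤ)^((p i : ℕ)) * (2 * ((i:ℕ):ℤ) + 1 - (n:ℤ)) := by
              have hi := i.isLt
              have hcast : ((n - 1 - (i:ℕ) : ℕ) : ℤ) = (n:ℤ) - 1 - ((i:ℕ):ℤ) := by omega
              rw [hcast]
              ring
      rw [hd k f]
      refine (Finset.sum_congr rfl fun r _ => Finset.sum_congr rfl fun s _ => term_eq r s).trans ?_
      refine (Finset.sum_congr rfl fun r _ => Finset.sum_comm).trans ?_
      refine Finset.sum_comm.trans ?_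
      refine Finset.sum_congr rfl fun i _ => ?_
      rw [← ccsum i]
      simp only [Finset.sum_smul]

  refine ⟨⟨fun i => (-1)^((p i : ℕ)), fun i => ?_, key⟩, fun hodd h2 => ?_⟩
  · rcases Nat.even_or_odd ((p i : ℕ)) with h | h
    · exact Or.inl h.neg_one_pow
    · exact Or.inr h.neg_one_pow
  · rw [key]
    apply Finset.sum_eq_zero
    intro i _
    obtain ⟨l, hl⟩ := hodd
    have hm : ((-1:ℤ)^((p i : ℕ)) * (2 * ((i:ℕ):ℤ) + 1 - (n:ℤ)))
        = ((-1:ℤ)^((p i : ℕ)) * (((i:ℕ):ℤ) - l)) + ((-1:ℤ)^((p i : ℕ)) * (((i:ℕ):ℤ) - l)) := by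
      have hl' : (n:ℤ) = 2*(l:ℤ)+1 := by exact_mod_cast hl
      rw [hl']
      ring
    rw [hm, add_smul, ← two_smul R, h2, zero_smul]
end
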